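/- Let Θ be a p×p symmetric positive definite matrix with σ² < 1/‖Θ‖. Suppose indices i ≠ j satisfy Θ^m_{ij} = 0 for all m = 1,…,k but Θ^{k+1}_{ij} ≠ 0 (where Θ^m denotes the m-th matrix power). Then for all sufficiently small σ > 0, the (i,j) entry of (Θ⁻¹ + σ²I)⁻¹ is nonzero. -/

import Mathlib

open Matrix

private lemma key_tele {p : ℕ} (Θ : Matrix (Fin p) (Fin p) ℝ) (t : ℝ) (k : ℕ) :
    (1 + t • Θ) * (∑ n ∈ Finset.range (k+1), (-t)^n • Θ^(n+1))
      = Θ - (-t)^(k+1) • Θ^(k+2) := by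
  induction k with
  | zero => simp [mul_add, add_mul, smul_smul, mul_smul_comm, smul_mul_assoc, pow_succ, pow_two]
  | succ k ih =>
      rw [Finset.sum_range_succ, mul_add, ih, mul_smul_comm, add_mul, one_mul,
        smul_mul_assoc, ← pow_succ']
      have h2 : (-t) ^ (k+1) • (t • Θ ^ (k+1+1+1)) = -((-t)^(k+2) • Θ^(k+3)) := by
        rw [smul_smul, ← neg_smul]
        congr 1
        ring
      rw [smul_add, h2]
      have h3 : (k+1+1) = k + 2 := rfl
      have h4 : (k+1+2) = k + 3 := rfl
      rw [h3, h4]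
      abel

/-- if all powers `Θ^m` for `1 ≤ m ≤ k` vanish at `(i,j)` but `Θ^(k+1)`
does not, then for all sufficiently small `σ > 0` the `(i,j)` entry of
`(Θ⁻¹ + σ²I)⁻¹` is nonzero. -/
theorem entry_nonzero_of_small_noise {p : ℕ} (Θ : Matrix (Fin p) (Fin p) ℝ)
    (hΘsymm : Θ.IsSymm) (hΘpd : Θ.PosDef)
    (N : Matrix (Fin p) (Fin p) ℝ → ℝ)
    (hN_nonneg : ∀ A, 0 ≤ N A)
    (hN_eq_zero : ∀ A, N A = 0 ↔ A = 0)
    (hN_add : ∀ A B, N (A + B) ≤ N A + N B)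
    (hN_smul : ∀ (c : ℝ) A, N (c • A) = |c| * N A)
    (hN_submul : ∀ A B, N (A * B) ≤ N A * N B)
    (i j : Fin p) (hij : i ≠ j) (k : ℕ)
    (hvanish : ∀ m : ℕ, 1 ≤ m → m ≤ k → (Θ ^ m) i j = 0)
    (hnonzero : (Θ ^ (k + 1)) i j ≠ 0) :
    ∃ σ₀ : ℝ, 0 < σ₀ ∧ ∀ σ : ℝ, 0 < σ → σ < σ₀ →
      σ ^ 2 < 1 / N Θ ∧
        ((Θ⁻¹ + (σ ^ 2) • (1 : Matrix (Fin p) (Fin p) ℝ))⁻¹) i j ≠ 0 := by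
  set a : ℝ := (Θ ^ (k+1)) i j with ha_def
  have ha : 0 < |a| := abs_pos.mpr hnonzero
  -- continuity of the remainder term
  set g : ℝ → ℝ := fun t => ((Θ^(k+2)) * (1 + t • Θ)⁻¹) i j with hg_def
  have hcont1 : Continuous fun t : ℝ => (1 + t • Θ) :=
    continuous_const.add (continuous_id.smul continuous_const)
  have hg_eq : g = fun t => ((1 + t • Θ).det)⁻¹ *
      ((Θ^(k+2)) * (1 + t • Θ).adjugate) i j := by
    funext t
    show ((Θ^(k+2)) * (1 + t • Θ)⁻¹) i j = _
    rw [Matrix.inv_def, Ring.inverse_eq_inv', Matrix.mul_smul, Matrix.smul_apply, smul_eq_mul]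
  have hgc : ContinuousAt g 0 := by
    rw [hg_eq]
    exact ((hcont1.matrix_det.continuousAt).inv₀ (by simp)).mul
      ((continuous_const.matrix_mul hcont1.matrix_adjugate).matrix_elem i j).continuousAt
  have htg : ContinuousAt (fun t => t * g t) 0 := continuousAt_id.mul hgc
  obtain ⟨δ, hδpos, hδ⟩ := Metric.continuousAt_iff.mp htg |a| ha
  -- positivity of N Θ
  have hΘne : Θ ≠ 0 := by
    intro h
    apply hnonzero
    rw [ha_def, h, zero_pow (Nat.succ_ne_zero k)]
    simp
  have hNpos : 0 < N Θ := (hN_nonneg Θ).lt_of_ne fun h => hΘne ((hN_eq_zero Θ).mp h.symm)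
  refine ⟨min (Real.sqrt δ) (Real.sqrt (1 / N Θ)), lt_min (Real.sqrt_pos.mpr hδpos)
    (Real.sqrt_pos.mpr (by positivity)), fun σ hσ hσ' => ?_⟩
  have h1 : σ ^ 2 < δ :=
    (Real.lt_sqrt hσ.le).mp (lt_of_lt_of_le hσ' (min_le_left _ _))
  have h2 : σ ^ 2 < 1 / N Θ :=
    (Real.lt_sqrt hσ.le).mp (lt_of_lt_of_le hσ' (min_le_right _ _))
  refine ⟨h2, ?_⟩
  set t : ℝ := σ ^ 2 with ht_def
  have ht : 0 < t := by positivity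
  -- invertibility
  have hsemi : (t • Θ).PosSemidef := by
    refine ⟨?_, fun x => ?_⟩
    · show (t • Θ)ᴴ = t • Θ
      rw [conjTranspose_smul, hΘpd.1.eq]
      norm_num
    · convert mul_nonneg ht.le (hΘpd.posSemidef.2 x) using 1
      simp only [Finsupp.sum, Finset.mul_sum, Matrix.smul_apply, smul_eq_mul]
      exact Finset.sum_congr rfl fun a _ => Finset.sum_congr rfl fun b _ => by ring
  have hpd1 : (1 + t • Θ).PosDef := Matrix.PosDef.add_posSemidef Matrix.PosDef.one hsemi
  have hu : IsUnit (1 + t • Θ).det := isUnit_iff_ne_zero.mpr hpd1.det_pos.ne'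
  have hΘu : IsUnit Θ.det := isUnit_iff_ne_zero.mpr hΘpd.det_pos.ne'
  set S : Matrix (Fin p) (Fin p) ℝ := ∑ n ∈ Finset.range (k+1), (-t)^n • Θ^(n+1) with hS_def
  have hc : Commute (1 + t • Θ) S := by
    have hΘS : Commute Θ S := by
      apply Commute.sum_right
      intro n _
      exact ((Commute.refl Θ).pow_right (n+1)).smul_right _
    exact (Commute.one_left S).add_left (hΘS.smul_left t)
  set B : Matrix (Fin p) (Fin p) ℝ := (1 + t • Θ)⁻¹ with hB_def
  have hB : (1 + t • Θ) * B = 1 := Matrix.mul_nonsing_inv _ hu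
  set c : ℝ := (-t)^(k+1) with hc_def
  have hkey : (1 + t • Θ) * S = Θ - c • Θ^(k+2) := key_tele Θ t k
  have hΘeq : Θ = (1 + t • Θ) * S + c • Θ^(k+2) := by rw [hkey]; abel
  have hmain : Θ * B = S + c • (Θ^(k+2) * B) := by
    calc Θ * B = ((1 + t • Θ) * S + c • Θ^(k+2)) * B := by rw [← hΘeq]
      _ = S * ((1 + t • Θ) * B) + c • (Θ^(k+2) * B) := by
          rw [add_mul, hc.eq, Matrix.smul_mul, Matrix.mul_assoc]
      _ = S + c • (Θ^(k+2) * B) := by rw [hB, Matrix.mul_one]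
  have hinv : (Θ⁻¹ + t • (1 : Matrix (Fin p) (Fin p) ℝ))⁻¹ = Θ * B := by
    apply Matrix.inv_eq_right_inv
    have : (Θ⁻¹ + t • 1) * (Θ * B) = (1 + t • Θ) * B := by
      rw [add_mul, ← Matrix.mul_assoc, Matrix.nonsing_inv_mul _ hΘu, Matrix.one_mul,
        Matrix.smul_mul, Matrix.one_mul, add_mul, Matrix.one_mul, Matrix.smul_mul]
    rw [this, hB]
  have hS : S i j = (-t)^k * a := by
    rw [hS_def, Matrix.sum_apply]
    rw [Finset.sum_eq_single_of_mem k (Finset.self_mem_range_succ k)]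
    · rw [Matrix.smul_apply, smul_eq_mul, ha_def]
    · intro n hn hnk
      have hn' : n + 1 ≤ k := Nat.succ_le_of_lt (lt_of_le_of_ne
        (Nat.lt_succ_iff.mp (Finset.mem_range.mp hn)) hnk)
      rw [Matrix.smul_apply, hvanish (n+1) (Nat.succ_le_succ (Nat.zero_le n)) hn', smul_zero]
  have hbound : |t * g t| < |a| := by
    have := hδ (show dist t 0 < δ by rw [Real.dist_eq, sub_zero, abs_of_pos ht]; exact h1)
    simpa [Real.dist_eq, abs_mul] using this
  have hentry : ((Θ⁻¹ + t • (1 : Matrix (Fin p) (Fin p) ℝ))⁻¹) i j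
      = (-t)^k * (a - t * g t) := by
    rw [hinv, hmain, Matrix.add_apply, Matrix.smul_apply, hS, smul_eq_mul, hg_def,
      hc_def, pow_succ]
    ring
  rw [hentry]
  refine mul_ne_zero (pow_ne_zero k (neg_ne_zero.mpr ht.ne')) ?_
  intro h
  rw [sub_eq_zero] at h
  rw [← h] at hbound
  exact lt_irrefl _ hbound
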